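/- Let α > β > γ > 0 be reals, δ ∈ (0,π), and ε = 1/√(cos(δ/2)). Define f₁(m) = ε√(α−γ)·sin(δm/2), h₁(m) = ε√(α−γ)·cos(δm/2), f₂(m) = ε√(α−γ)·cos(δm/2), h₂(m) = ε√(α−γ)·sin(δm/2) for m ∈ ℤ, and let g₁, g₂ : ℤ → ℝ satisfy g₁(m)g₁(m+1) = (α−β) − f₁(m)f₁(m+1) and g₂(m)g₂(m+1) = f₂(m)f₂(m+1) − (α−β) for all m ∈ ℤ. Let r = (x,y,z) be the associated discrete ellipsoid binet. Then: (a) for all m ∈ ℤ, f₁(m)f₁(m+1) + h₁(m)h₁(m+1) = α−γ and f₂(m)f₂(m+1) + h₂(m)h₂(m+1) = α−γ, so the full set of discrete functional equations is satisfied; and (b) for every sign σ ∈ {1,−1} and all (m₁,m₂) ∈ ℤ², √(1/β − 1/α)·x(m₁,m₂) + σ·√(1/γ − 1/β)·z(m₁,m₂) = (1/cos(δ/2))·√((α−γ)/β)·sin(δ(m₁+σm₂)/2). In particular this quantity depends only on m₁ + σm₂, so the diagonal polygons m₁ + σm₂ = const lie in the parallel planes of the circular cross sections of the classical ellipsoid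 x²/α + y²/β + z²/γ = 1. -/

import Mathlib

open Real

theorem discrete_ellipsoid_trig_solution_diagonals_in_circular_planes
    (α β γ : ℝ) (hαβ : β < α) (hβγ : γ < β) (hγ : 0 < γ)
    (δ : ℝ) (hδ : δ ∈ Set.Ioo 0 Real.pi)
    (ε : ℝ) (hεdef : ε = 1 / Real.sqrt (Real.cos (δ / 2)))
    (f₁ h₁ f₂ h₂ : ℤ → ℝ)
    (hf₁ : ∀ m : ℤ, f₁ m = ε * Real.sqrt (α - γ) * Real.sin (δ * m / 2))
    (hh₁ : ∀ m : ℤ, h₁ m = ε * Real.sqrt (α - γ) * Real.cos (δ * m / 2))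
    (hf₂ : ∀ m : ℤ, f₂ m = ε * Real.sqrt (α - γ) * Real.cos (δ * m / 2))
    (hh₂ : ∀ m : ℤ, h₂ m = ε * Real.sqrt (α - γ) * Real.sin (δ * m / 2))
    (g₁ g₂ : ℤ → ℝ)
    (hg₁ : ∀ m : ℤ, g₁ m * g₁ (m + 1) = (α - β) - f₁ m * f₁ (m + 1))
    (hg₂ : ∀ m : ℤ, g₂ m * g₂ (m + 1) = f₂ m * f₂ (m + 1) - (α - β))
    (x y z : ℤ → ℤ → ℝ)
    (hx : ∀ m₁ m₂ : ℤ, x m₁ m₂ = Real.sqrt (α / ((α - β) * (α - γ))) * f₁ m₁ * f₂ m₂)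
    (hy : ∀ m₁ m₂ : ℤ, y m₁ m₂ = Real.sqrt (β / ((α - β) * (β - γ))) * g₁ m₁ * g₂ m₂)
    (hz : ∀ m₁ m₂ : ℤ, z m₁ m₂ = Real.sqrt (γ / ((α - γ) * (β - γ))) * h₁ m₁ * h₂ m₂) :
    (∀ m : ℤ, f₁ m * f₁ (m + 1) + h₁ m * h₁ (m + 1) = α - γ ∧
      f₂ m * f₂ (m + 1) + h₂ m * h₂ (m + 1) = α - γ) ∧
    (∀ σ : ℤ, (σ = 1 ∨ σ = -1) → ∀ m₁ m₂ : ℤ,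
      Real.sqrt (1 / β - 1 / α) * x m₁ m₂ + (σ : ℝ) * Real.sqrt (1 / γ - 1 / β) * z m₁ m₂
        = (1 / Real.cos (δ / 2)) * Real.sqrt ((α - γ) / β)
            * Real.sin (δ * ((m₁ : ℝ) + (σ : ℝ) * (m₂ : ℝ)) / 2)) := by
  obtain ⟨hδ0, hδπ⟩ := hδ
  have hβ : 0 < β := hγ.trans hβγ
  have hα : 0 < α := hβ.trans hαβ
  have hA : (0:ℝ) < α - γ := by linarith
  have hB : (0:ℝ) < α - β := by linarith
  have hC : (0:ℝ) < β - γ := by linarith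
  have hc : 0 < Real.cos (δ / 2) := by
    apply Real.cos_pos_of_mem_Ioo
    constructor
    · nlinarith [Real.pi_pos]
    · linarith
  have hε2 : ε * ε = 1 / Real.cos (δ / 2) := by
    rw [hεdef, div_mul_div_comm, one_mul, Real.mul_self_sqrt hc.le]
  have hsqA : Real.sqrt (α - γ) * Real.sqrt (α - γ) = α - γ := Real.mul_self_sqrt hA.le
  have hε2' : ε * ε * Real.cos (δ / 2) = 1 := by
    rw [hε2]; field_simp
  have key : ∀ a b : ℝ, b - a = δ / 2 →
      Real.sin a * Real.sin b + Real.cos a * Real.cos b = Real.cos (δ / 2) := by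
    intro a b h
    rw [← h, Real.cos_sub]
    ring
  -- coefficient identities for part (b)
  have h1nn : (0:ℝ) ≤ 1 / β - 1 / α := by
    rw [sub_nonneg]
    exact one_div_le_one_div_of_le hβ hαβ.le
  have h2nn : (0:ℝ) ≤ 1 / γ - 1 / β := by
    rw [sub_nonneg]
    exact one_div_le_one_div_of_le hγ hβγ.le
  have s1 : Real.sqrt (1 / β - 1 / α) * Real.sqrt (α / ((α - β) * (α - γ)))
      = Real.sqrt (1 / (β * (α - γ))) := by
    rw [← Real.sqrt_mul h1nn]
    congr 1
    field_simp
  have s2 : Real.sqrt (1 / γ - 1 / β) * Real.sqrt (γ / ((α - γ) * (β - γ)))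
      = Real.sqrt (1 / (β * (α - γ))) := by
    rw [← Real.sqrt_mul h2nn]
    congr 1
    field_simp
  have s3 : Real.sqrt (1 / (β * (α - γ))) * (α - γ) = Real.sqrt ((α - γ) / β) := by
    rw [show (α - γ) / β = 1 / (β * (α - γ)) * ((α - γ) * (α - γ)) by field_simp,
      Real.sqrt_mul (by positivity), Real.sqrt_mul_self hA.le]
  have c1 : Real.sqrt (1 / β - 1 / α) * Real.sqrt (α / ((α - β) * (α - γ))) * (ε * ε)
      * (Real.sqrt (α - γ) * Real.sqrt (α - γ))
      = (1 / Real.cos (δ / 2)) * Real.sqrt ((α - γ) / β) := by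
    rw [s1, hε2, hsqA]
    linear_combination (1 / Real.cos (δ / 2)) * s3
  have c2 : Real.sqrt (1 / γ - 1 / β) * Real.sqrt (γ / ((α - γ) * (β - γ))) * (ε * ε)
      * (Real.sqrt (α - γ) * Real.sqrt (α - γ))
      = (1 / Real.cos (δ / 2)) * Real.sqrt ((α - γ) / β) := by
    rw [s2, hε2, hsqA]
    linear_combination (1 / Real.cos (δ / 2)) * s3
  constructor
  · intro m
    have hstep : δ * ((m : ℝ) + 1) / 2 - δ * m / 2 = δ / 2 := by ring
    have hk := key (δ * m / 2) (δ * ((m : ℝ) + 1) / 2) hstep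
    constructor
    · rw [hf₁, hf₁, hh₁, hh₁]
      push_cast
      linear_combination (ε * ε * (Real.sqrt (α - γ) * Real.sqrt (α - γ))) * hk
        + (Real.sqrt (α - γ) * Real.sqrt (α - γ)) * hε2' + hsqA
    · rw [hf₂, hf₂, hh₂, hh₂]
      push_cast
      linear_combination (ε * ε * (Real.sqrt (α - γ) * Real.sqrt (α - γ))) * hk
        + (Real.sqrt (α - γ) * Real.sqrt (α - γ)) * hε2' + hsqA
  · intro σ hσ m₁ m₂
    rw [hx, hz, hf₁, hf₂, hh₁, hh₂]
    rcases hσ with h | h <;> subst h <;> push_cast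
    · rw [show δ * ((m₁ : ℝ) + 1 * (m₂ : ℝ)) / 2 = δ * (m₁ : ℝ) / 2 + δ * (m₂ : ℝ) / 2 by ring,
        Real.sin_add]
      linear_combination Real.sin (δ * (m₁ : ℝ) / 2) * Real.cos (δ * (m₂ : ℝ) / 2) * c1
        + Real.cos (δ * (m₁ : ℝ) / 2) * Real.sin (δ * (m₂ : ℝ) / 2) * c2
    · rw [show δ * ((m₁ : ℝ) + (-1) * (m₂ : ℝ)) / 2 = δ * (m₁ : ℝ) / 2 - δ * (m₂ : ℝ) / 2 by ring,
        Real.sin_sub]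
      linear_combination Real.sin (δ * (m₁ : ℝ) / 2) * Real.cos (δ * (m₂ : ℝ) / 2) * c1
        - Real.cos (δ * (m₁ : ℝ) / 2) * Real.sin (δ * (m₂ : ℝ) / 2) * c2
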